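/- arXiv:2512.21086 — 2 statements merged into one kernel-verified Lean document; each statement's English description precedes it below -/
import Mathlib

section
/- Fix integers a ≥ 2 and b ≥ 0 with a + b ≥ 2, and let π be a permutation of size n that contains at least one pattern from Π(a−1,b+1). Let i_1 < ⋯ < i_m be indices in {1,…,n}. If the sequence π_{i_1}…π_{i_m} is not order-isomorphic to the sequence S(π)_{i_1}…S(π)_{i_m}, then some index i_j satisfies π_{i_j} = underline-a and some index i_l satisfies that π_{i_l} is an associated (a−1)-value of underline-a. -/
/-- `f` picks out an occurrence of the pattern `ρ` in the permutation `π`. -/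
def PermOcc {n m : ℕ} (π : Equiv.Perm (Fin n)) (ρ : Equiv.Perm (Fin m))
    (f : Fin m → Fin n) : Prop :=
  StrictMono f ∧ ∀ j l : Fin m, π (f j) < π (f l) ↔ ρ j < ρ l

/-- `π` contains the pattern `ρ`. -/
def PermContains {n m : ℕ} (π : Equiv.Perm (Fin n)) (ρ : Equiv.Perm (Fin m)) : Prop :=
  ∃ f : Fin m → Fin n, PermOcc π ρ f

/-- The partial shuffle of size `m` with moved (1-indexed) value `a`:
the permutations of size `m`, other than the identity, in which the values
other than `a` appear in increasing order.  `Π(a,b)` is `partialShuffle (a+b) a`. -/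
def partialShuffle (m a : ℕ) : Set (Equiv.Perm (Fin m)) :=
  {σ | σ ≠ 1 ∧ ∀ i j : Fin m, i < j → (σ i : ℕ) + 1 ≠ a → (σ j : ℕ) + 1 ≠ a → σ i < σ j}

/-- The decreasing permutation `δ_k`. -/
def descPerm (k : ℕ) : Equiv.Perm (Fin k) := Fin.revPerm

/-- `σ_{a,b}` (with `m = a + b`): the identity permutation with the
values `a-1` and `a` transposed. -/
def sigmaPerm (m a : ℕ) (h2 : 2 ≤ a) (hm : a ≤ m) : Equiv.Perm (Fin m) :=
  Equiv.swap ⟨a - 2, by omega⟩ ⟨a - 1, by omega⟩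

/-- The (1-indexed) value `v` of `π` acts as the `c`-element (i.e. corresponds to the
entry with 1-indexed value `c`) of an occurrence in `π` of some pattern from `P`. -/
def ActsAs {n m : ℕ} (π : Equiv.Perm (Fin n)) (P : Set (Equiv.Perm (Fin m)))
    (c v : ℕ) : Prop :=
  ∃ ρ ∈ P, ∃ f : Fin m → Fin n, PermOcc π ρ f ∧
    ∃ j : Fin m, (ρ j : ℕ) + 1 = c ∧ (π (f j) : ℕ) + 1 = v

/-- `underline-a`: the smallest (1-indexed) value of `π` acting as the `a`-element of an
occurrence of a pattern from `Π(a-1, b+1)`. -/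
noncomputable def underA (n a b : ℕ) (π : Equiv.Perm (Fin n)) : ℕ :=
  sInf {v | ActsAs π (partialShuffle (a + b) (a - 1)) a v}

/-- `q` is an associated `(a-1)`-value of `underline-a` in `π`. -/
def IsAssoc (n a b : ℕ) (π : Equiv.Perm (Fin n)) (q : ℕ) : Prop :=
  ∃ ρ ∈ partialShuffle (a + b) (a - 1), ∃ f : Fin (a + b) → Fin n, PermOcc π ρ f ∧
    (∃ j : Fin (a + b), (ρ j : ℕ) + 1 = a ∧ (π (f j) : ℕ) + 1 = underA n a b π) ∧
    (∃ l : Fin (a + b), (ρ l : ℕ) + 1 = a - 1 ∧ (π (f l) : ℕ) + 1 = q)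

/-- `underline-(a-1)`: the smallest associated `(a-1)`-value. -/
noncomputable def underA1 (n a b : ℕ) (π : Equiv.Perm (Fin n)) : ℕ :=
  sInf {q | IsAssoc n a b π q}

/-- The permutation of `Fin n` rotating the (0-indexed) interval `[x, y]`:
`y ↦ x` and `v ↦ v + 1` for `x ≤ v < y`; all other elements are fixed. -/
def rotPerm (n x y : ℕ) : Equiv.Perm (Fin n) :=
  if h : x ≤ y ∧ y < n then
    { toFun := fun v =>
        if (v : ℕ) = y then ⟨x, by omega⟩
        else if hv : x ≤ (v : ℕ) ∧ (v : ℕ) < y then ⟨(v : ℕ) + 1, by omega⟩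
        else v
      invFun := fun v =>
        if (v : ℕ) = x then ⟨y, by omega⟩
        else if hv : x < (v : ℕ) ∧ (v : ℕ) ≤ y then ⟨(v : ℕ) - 1, by omega⟩
        else v
      left_inv := by
        intro v
        dsimp only
        split_ifs <;> apply Fin.ext <;> simp_all <;> omega
      right_inv := by
        intro v
        dsimp only
        split_ifs <;> apply Fin.ext <;> simp_all <;> omega }
  else 1

/-- The map `S` (depending on the parameters `a`, `b`): if `π` contains a pattern from
`Π(a-1, b+1)`, the values in the 1-indexed interval `[underline-(a-1), underline-a - 1]`
are increased by `1` and the value `underline-a` is replaced by `underline-(a-1)`;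
otherwise `π` is fixed. -/
noncomputable def Smap (n a b : ℕ) (π : Equiv.Perm (Fin n)) : Equiv.Perm (Fin n) :=
  open Classical in
  if ∃ ρ ∈ partialShuffle (a + b) (a - 1), PermContains π ρ then
    rotPerm n (underA1 n a b π - 1) (underA n a b π - 1) * π
  else π

lemma perm_rank {m : ℕ} (σ : Equiv.Perm (Fin m)) (i : Fin m) :
    (Finset.univ.filter (fun k => σ k < σ i)).card = (σ i : ℕ) := by
  have h1 : (Finset.univ.filter (fun k => σ k < σ i))
      = (Finset.Iio (σ i)).map σ.symm.toEmbedding := by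
    ext k
    simp only [Finset.mem_filter, Finset.mem_univ, true_and, Finset.mem_map,
      Finset.mem_Iio, Equiv.coe_toEmbedding]
    constructor
    · intro hk; exact ⟨σ k, hk, σ.symm_apply_apply k⟩
    · rintro ⟨v, hv, rfl⟩; simpa using hv
  rw [h1, Finset.card_map, Fin.card_Iio]

lemma perm_eq_one_of_strictMono {m : ℕ} (σ : Equiv.Perm (Fin m)) (h : StrictMono σ) : σ = 1 := by
  apply Equiv.ext
  intro i
  apply Fin.ext
  have h1 := perm_rank σ i
  have h2 : (Finset.univ.filter (fun k => σ k < σ i)) = Finset.Iio i := by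
    ext k
    simp [h.lt_iff_lt]
  rw [h2, Fin.card_Iio] at h1
  simpa using h1.symm

lemma exists_occ {n m : ℕ} (π : Equiv.Perm (Fin n)) (σ : Equiv.Perm (Fin m))
    (g : Fin m → Fin n) (hg : ∀ k l, π (g k) < π (g l) ↔ σ k < σ l) :
    ∃ (f : Fin m → Fin n) (ρ : Equiv.Perm (Fin m)) (o : Equiv.Perm (Fin m)),
      PermOcc π ρ f ∧ (∀ i, f i = g (o i)) ∧ (∀ i, (ρ i : ℕ) = (σ (o i) : ℕ)) := by
  classical
  have ginj : Function.Injective g := by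
    intro k l hkl
    by_contra hne
    rcases lt_or_gt_of_ne (fun hh : σ k = σ l => hne (σ.injective hh)) with hlt | hlt
    · have := (hg k l).mpr hlt; rw [hkl] at this; exact lt_irrefl _ this
    · have := (hg l k).mpr hlt; rw [hkl] at this; exact lt_irrefl _ this
  set T : Finset (Fin n) := Finset.univ.image g with hT
  have hTcard : T.card = m := by
    rw [hT, Finset.card_image_of_injective _ ginj, Finset.card_univ, Fintype.card_fin]
  set f : Fin m → Fin n := fun i => (T.orderIsoOfFin hTcard i : Fin n) with hf
  have hfmono : StrictMono f := fun i j hij => by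
    exact Subtype.coe_lt_coe.mpr ((T.orderIsoOfFin hTcard).strictMono hij)
  have hmemT : ∀ i, ∃ k, g k = f i := by
    intro i
    have : (f i) ∈ T := (T.orderIsoOfFin hTcard i).2
    rw [hT] at this
    simpa using (Finset.mem_image.mp this).imp (fun k hk => hk.2)
  choose ofun hofun using hmemT
  have oinj : Function.Injective ofun := by
    intro i j hij
    exact hfmono.injective (by rw [← hofun i, ← hofun j, hij])
  have obij : Function.Bijective ofun := (Finite.injective_iff_bijective).mp oinj
  set o : Equiv.Perm (Fin m) := Equiv.ofBijective ofun obij with ho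
  have hfo : ∀ i, f i = g (o i) := fun i => (hofun i).symm
  set v : Fin m → Fin n := fun k => π (f k) with hv
  have vinj : Function.Injective v := fun i j hij => hfmono.injective (π.injective hij)
  have hsm : StrictMono (v ∘ Tuple.sort v) :=
    (Tuple.monotone_sort v).strictMono_of_injective (vinj.comp (Tuple.sort v).injective)
  set ρ : Equiv.Perm (Fin m) := (Tuple.sort v)⁻¹ with hρ
  have hocc : PermOcc π ρ f := by
    refine ⟨hfmono, fun j l => ?_⟩
    have h1 := hsm.lt_iff_lt (a := ρ j) (b := ρ l)
    simp only [Function.comp, hρ, Equiv.Perm.inv_def] at h1 ⊢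
    rw [Equiv.apply_symm_apply, Equiv.apply_symm_apply] at h1
    exact h1
  refine ⟨f, ρ, o, hocc, hfo, fun i => ?_⟩
  rw [← perm_rank ρ i, ← perm_rank σ (o i)]
  apply Finset.card_bij (fun k _ => o k)
  · intro k hk
    simp only [Finset.mem_filter, Finset.mem_univ, true_and] at hk ⊢
    rw [← hg, ← hfo, ← hfo]
    exact (hocc.2 k i).mpr hk
  · intro k _ l _ hkl; exact o.injective hkl
  · intro k hk
    refine ⟨o.symm k, ?_, o.apply_symm_apply k⟩
    simp only [Finset.mem_filter, Finset.mem_univ, true_and] at hk ⊢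
    apply (hocc.2 _ i).mp
    rw [hfo, hfo, o.apply_symm_apply]
    exact (hg _ _).mpr hk

theorem not_orderIso_involves_underA (a b n m : ℕ) (ha : 2 ≤ a) (π : Equiv.Perm (Fin n))
    (h : ∃ ρ ∈ partialShuffle (a + b) (a - 1), PermContains π ρ)
    (idx : Fin m → Fin n) (hidx : StrictMono idx)
    (hiso : ¬ ∀ j l : Fin m,
      π (idx j) < π (idx l) ↔ Smap n a b π (idx j) < Smap n a b π (idx l)) :
    (∃ j : Fin m, (π (idx j) : ℕ) + 1 = underA n a b π) ∧
      (∃ l : Fin m, IsAssoc n a b π ((π (idx l) : ℕ) + 1)) := by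
  classical
  have ha1 : a - 1 < a + b := by omega
  have ha2 : a - 2 < a + b := by omega
  have hne1 : {v | ActsAs π (partialShuffle (a + b) (a - 1)) a v}.Nonempty := by
    obtain ⟨ρ, hρ, f, hf⟩ := h
    refine ⟨(π (f (ρ.symm ⟨a - 1, ha1⟩)) : ℕ) + 1, ρ, hρ, f, hf, ρ.symm ⟨a - 1, ha1⟩, ?_, rfl⟩
    rw [Equiv.apply_symm_apply]
    show a - 1 + 1 = a
    omega
  have huA_mem : ActsAs π (partialShuffle (a + b) (a - 1)) a (underA n a b π) :=
    Nat.sInf_mem hne1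
  obtain ⟨ρa, hρaP, fa, hfa, ja, hja, hjav⟩ := huA_mem
  have hne2 : {q | IsAssoc n a b π q}.Nonempty := by
    refine ⟨(π (fa (ρa.symm ⟨a - 2, ha2⟩)) : ℕ) + 1, ρa, hρaP, fa, hfa, ⟨ja, hja, hjav⟩,
      ρa.symm ⟨a - 2, ha2⟩, ?_, rfl⟩
    rw [Equiv.apply_symm_apply]
    show a - 2 + 1 = a - 1
    omega
  have h1mem : IsAssoc n a b π (underA1 n a b π) := Nat.sInf_mem hne2
  obtain ⟨ρ0, hρ0P, f0, hocc0, ⟨j0, hj0, hj0v⟩, ⟨l0, hl0, hl0v⟩⟩ := h1mem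
  set uA := underA n a b π with huAdef
  set uA1 := underA1 n a b π with huA1def
  have hj0' : (ρ0 j0 : ℕ) = a - 1 := by omega
  have hl0' : (ρ0 l0 : ℕ) = a - 2 := by omega
  have huApos : 1 ≤ uA := by omega
  have huA1pos : 1 ≤ uA1 := by omega
  have hvj0 : (π (f0 j0) : ℕ) = uA - 1 := by omega
  have hvl0 : (π (f0 l0) : ℕ) = uA1 - 1 := by omega
  have hltF : π (f0 l0) < π (f0 j0) :=
    (hocc0.2 l0 j0).mpr (by rw [Fin.lt_def, hj0', hl0']; omega)
  have hlt : uA1 < uA := by rw [Fin.lt_def, hvj0, hvl0] at hltF; omega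
  have hyn : uA - 1 < n := by have := (π (f0 j0)).isLt; omega
  have evj : ∀ k, ((π (f0 k) : ℕ) < uA - 1 ↔ (ρ0 k : ℕ) < a - 1) := by
    intro k
    have hh := hocc0.2 k j0
    rw [Fin.lt_def, Fin.lt_def, hvj0, hj0'] at hh
    exact hh
  have evj2 : ∀ k, (uA - 1 < (π (f0 k) : ℕ) ↔ a - 1 < (ρ0 k : ℕ)) := by
    intro k
    have hh := hocc0.2 j0 k
    rw [Fin.lt_def, Fin.lt_def, hvj0, hj0'] at hh
    exact hh
  have evl : ∀ k, ((π (f0 k) : ℕ) < uA1 - 1 ↔ (ρ0 k : ℕ) < a - 2) := by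
    intro k
    have hh := hocc0.2 k l0
    rw [Fin.lt_def, Fin.lt_def, hvl0, hl0'] at hh
    exact hh
  have evl2 : ∀ k, (uA1 - 1 < (π (f0 k) : ℕ) ↔ a - 2 < (ρ0 k : ℕ)) := by
    intro k
    have hh := hocc0.2 l0 k
    rw [Fin.lt_def, Fin.lt_def, hvl0, hl0'] at hh
    exact hh
  have hne2' : ∀ k, k ≠ l0 → (ρ0 k : ℕ) ≠ a - 2 := by
    intro k hk hkk
    exact hk (ρ0.injective (Fin.ext (by rw [hkk, hl0'])))
  have hnej : ∀ k, k ≠ j0 → (ρ0 k : ℕ) ≠ a - 1 := by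
    intro k hk hkk
    exact hk (ρ0.injective (Fin.ext (by rw [hkk, hj0'])))
  have hρ0incr : ∀ i j : Fin (a + b), i < j → (ρ0 i : ℕ) ≠ a - 2 → (ρ0 j : ℕ) ≠ a - 2 →
      (ρ0 i : ℕ) < (ρ0 j : ℕ) := by
    intro i j hij hi hj
    have := hρ0P.2 i j hij (by omega) (by omega)
    rwa [Fin.lt_def] at this
  have hl0j0 : l0 ≠ j0 := fun hh => by rw [hh, hj0'] at hl0'; omega
  -- the key step: every value strictly between uA1 (incl.) and uA is associated
  have key : ∀ p : Fin n, uA1 ≤ (π p : ℕ) + 1 → (π p : ℕ) + 1 < uA →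
      IsAssoc n a b π ((π p : ℕ) + 1) := by
    intro p hp1 hp2
    by_cases hpe : (π p : ℕ) + 1 = uA1
    · rw [hpe, huA1def]
      exact Nat.sInf_mem hne2
    have hq1 : uA1 - 1 < (π p : ℕ) := by omega
    have hq2 : (π p : ℕ) < uA - 1 := by omega
    set g : Fin (a + b) → Fin n := fun k => if k = l0 then p else f0 k with hgdef
    have hgl0 : g l0 = p := by simp [hgdef]
    have hgne : ∀ k, k ≠ l0 → g k = f0 k := fun k hk => by simp [hgdef, hk]
    have hgiso : ∀ k l : Fin (a + b), π (g k) < π (g l) ↔ ρ0 k < ρ0 l := by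
      intro k l
      by_cases hk : k = l0 <;> by_cases hl : l = l0
      · rw [hk, hl]; simp
      · subst hk
        rw [hgl0, hgne l hl, Fin.lt_def, Fin.lt_def, hl0']
        have h1 := evl l; have h2 := evl2 l; have h3 := evj l; have h4 := evj2 l
        have h5 := hne2' l hl
        omega
      · subst hl
        rw [hgl0, hgne k hk, Fin.lt_def, Fin.lt_def, hl0']
        have h1 := evl k; have h2 := evl2 k; have h3 := evj k; have h4 := evj2 k
        have h5 := hne2' k hk
        omega
      · rw [hgne k hk, hgne l hl]
        exact hocc0.2 k l
    obtain ⟨f', ρ', o, hocc', hfo, hρo⟩ := exists_occ π ρ0 g hgiso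
    by_cases hρ'1 : ρ' = 1
    · exfalso
      have e1 : ∀ i : Fin (a + b), (ρ0 (o i) : ℕ) = (i : ℕ) := by
        intro i
        rw [← hρo i, hρ'1]
        simp
      have e2 : ∀ k : Fin (a + b), (ρ0 k : ℕ) = ((o.symm k : Fin (a + b)) : ℕ) := by
        intro k
        conv_lhs => rw [← o.apply_symm_apply k]
        exact e1 (o.symm k)
      have hginc : ∀ k l : Fin (a + b), g k < g l ↔ (ρ0 k : ℕ) < (ρ0 l : ℕ) := by
        intro k l
        have h8 : f' (o.symm k) < f' (o.symm l) ↔ (o.symm k) < (o.symm l) :=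
          hocc'.1.lt_iff_lt
        rw [hfo, hfo, o.apply_symm_apply, o.apply_symm_apply] at h8
        rw [e2 k, e2 l, ← Fin.lt_def]
        exact h8
      set g2 : Fin (a + b) → Fin n := fun k => if k = j0 then p else f0 k with hg2def
      have hg2j0 : g2 j0 = p := by simp [hg2def]
      have hg2ne : ∀ k, k ≠ j0 → g2 k = f0 k := fun k hk => by simp [hg2def, hk]
      have hg2iso : ∀ k l : Fin (a + b), π (g2 k) < π (g2 l) ↔ ρ0 k < ρ0 l := by
        intro k l
        by_cases hk : k = j0 <;> by_cases hl : l = j0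
        · rw [hk, hl]; simp
        · subst hk
          rw [hg2j0, hg2ne l hl, Fin.lt_def, Fin.lt_def, hj0']
          have h1 := evl l; have h2 := evl2 l; have h3 := evj l; have h4 := evj2 l
          have h5 := hnej l hl
          omega
        · subst hl
          rw [hg2j0, hg2ne k hk, Fin.lt_def, Fin.lt_def, hj0']
          have h1 := evl k; have h2 := evl2 k; have h3 := evj k; have h4 := evj2 k
          have h5 := hnej k hk
          omega
        · rw [hg2ne k hk, hg2ne l hl]
          exact hocc0.2 k l
      obtain ⟨f2, ρ2, o2, hocc2, hfo2, hρo2⟩ := exists_occ π ρ0 g2 hg2iso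
      have hρ2mem : ρ2 ∈ partialShuffle (a + b) (a - 1) := by
        constructor
        · intro hρ21
          have e1' : ∀ i : Fin (a + b), (ρ0 (o2 i) : ℕ) = (i : ℕ) := by
            intro i
            rw [← hρo2 i, hρ21]
            simp
          have e2' : ∀ k : Fin (a + b), (ρ0 k : ℕ) = ((o2.symm k : Fin (a + b)) : ℕ) := by
            intro k
            conv_lhs => rw [← o2.apply_symm_apply k]
            exact e1' (o2.symm k)
          have hg2inc : ∀ k l : Fin (a + b), g2 k < g2 l ↔ (ρ0 k : ℕ) < (ρ0 l : ℕ) := by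
            intro k l
            have h8 : f2 (o2.symm k) < f2 (o2.symm l) ↔ (o2.symm k) < (o2.symm l) :=
              hocc2.1.lt_iff_lt
            rw [hfo2, hfo2, o2.apply_symm_apply, o2.apply_symm_apply] at h8
            rw [e2' k, e2' l, ← Fin.lt_def]
            exact h8
          have hsm0 : StrictMono ρ0 := by
            intro k l hkl
            rw [Fin.lt_def]
            by_cases hk : k = l0
            · by_cases hl : l = j0
              · rw [hk, hl, hl0', hj0']; omega
              · rw [hk]
                have hkl' : l0 < l := by rw [← hk]; exact hkl
                exact (hg2inc l0 l).mp
                  (by rw [hg2ne l0 hl0j0, hg2ne l hl]; exact hocc0.1 hkl')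
            · by_cases hl : l = l0
              · by_cases hk2 : k = j0
                · exfalso
                  have hkl' : j0 < l0 := by rw [← hk2, ← hl]; exact hkl
                  have hA : g l0 < g j0 := (hginc l0 j0).mpr (by rw [hl0', hj0']; omega)
                  rw [hgl0, hgne j0 (fun hh => hl0j0 hh.symm)] at hA
                  have hC : ¬ (p < f0 l0) := by
                    intro hc
                    have h9 : g2 j0 < g2 l0 := by rw [hg2j0, hg2ne l0 hl0j0]; exact hc
                    have h10 := (hg2inc j0 l0).mp h9
                    rw [hj0', hl0'] at h10
                    omega
                  have hD : p ≠ f0 l0 := by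
                    intro hh
                    rw [hh, hvl0] at hq1
                    omega
                  have hE : f0 l0 < p := lt_of_le_of_ne (not_lt.mp hC) (fun hh => hD hh.symm)
                  have hF : f0 l0 < f0 j0 := hE.trans hA
                  have hG : l0 < j0 := hocc0.1.lt_iff_lt.mp hF
                  exact absurd hkl' (asymm hG)
                · rw [hl]
                  have hkl' : k < l0 := by rw [← hl]; exact hkl
                  exact (hg2inc k l0).mp
                    (by rw [hg2ne k hk2, hg2ne l0 hl0j0]; exact hocc0.1 hkl')
              · exact hρ0incr k l hkl (hne2' k hk) (hne2' l hl)
          exact hρ0P.1 (perm_eq_one_of_strictMono ρ0 hsm0)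
        · intro i j hij hi hj
          rw [Fin.lt_def, hρo2 i, hρo2 j]
          have hii : o2 i ≠ l0 := fun hh => hi (by rw [hρo2 i, hh, hl0']; omega)
          have hjj : o2 j ≠ l0 := fun hh => hj (by rw [hρo2 j, hh, hl0']; omega)
          have hpos : f2 i < f2 j := hocc2.1 hij
          rw [hfo2 i, hfo2 j] at hpos
          by_cases hij0 : o2 i = j0
          · have hjj0 : o2 j ≠ j0 := fun hh => hij.ne (o2.injective (hij0.trans hh.symm))
            rw [hij0, hg2j0, hg2ne (o2 j) hjj0] at hpos
            have h6 : (ρ0 l0 : ℕ) < (ρ0 (o2 j) : ℕ) :=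
              (hginc l0 (o2 j)).mp (by rw [hgl0, hgne (o2 j) hjj]; exact hpos)
            have h7 := hnej (o2 j) hjj0
            rw [hij0, hj0']
            rw [hl0'] at h6
            omega
          · by_cases hjj0 : o2 j = j0
            · rw [hjj0, hg2j0, hg2ne (o2 i) hij0] at hpos
              have h6 : (ρ0 (o2 i) : ℕ) < (ρ0 l0 : ℕ) :=
                (hginc (o2 i) l0).mp (by rw [hgl0, hgne (o2 i) hii]; exact hpos)
              rw [hjj0, hj0']
              rw [hl0'] at h6
              omega
            · rw [hg2ne _ hij0, hg2ne _ hjj0] at hpos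
              exact hρ0incr _ _ (hocc0.1.lt_iff_lt.mp hpos) (hne2' _ hii) (hne2' _ hjj)
      have hActs : ActsAs π (partialShuffle (a + b) (a - 1)) a ((π p : ℕ) + 1) := by
        refine ⟨ρ2, hρ2mem, f2, hocc2, o2.symm j0, ?_, ?_⟩
        · rw [hρo2, o2.apply_symm_apply, hj0']; omega
        · rw [hfo2, o2.apply_symm_apply, hg2j0]
      have h9 : underA n a b π ≤ (π p : ℕ) + 1 := Nat.sInf_le hActs
      omega
    · refine ⟨ρ', ⟨hρ'1, ?_⟩, f', hocc', ⟨o.symm j0, ?_, ?_⟩, ⟨o.symm l0, ?_, ?_⟩⟩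
      · intro i j hij hi hj
        rw [Fin.lt_def, hρo i, hρo j]
        have hii : o i ≠ l0 := fun hh => hi (by rw [hρo i, hh, hl0']; omega)
        have hjj : o j ≠ l0 := fun hh => hj (by rw [hρo j, hh, hl0']; omega)
        have hpos : f' i < f' j := hocc'.1 hij
        rw [hfo i, hfo j, hgne _ hii, hgne _ hjj] at hpos
        exact hρ0incr _ _ (hocc0.1.lt_iff_lt.mp hpos) (hne2' _ hii) (hne2' _ hjj)
      · rw [hρo, o.apply_symm_apply, hj0']; omega
      · rw [hfo, o.apply_symm_apply, hgne j0 (fun hh => hl0j0 hh.symm), hvj0]; omega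
      · rw [hρo, o.apply_symm_apply, hl0']; omega
      · rw [hfo, o.apply_symm_apply, hgl0]
  -- back to the top level
  rw [not_forall] at hiso
  obtain ⟨j, hiso⟩ := hiso
  rw [not_forall] at hiso
  obtain ⟨l, hjl⟩ := hiso
  have hxy : uA1 - 1 ≤ uA - 1 := by omega
  have hrot : ∀ w : Fin n, ((rotPerm n (uA1 - 1) (uA - 1)) w : ℕ) =
      if (w : ℕ) = uA - 1 then uA1 - 1
      else if uA1 - 1 ≤ (w : ℕ) ∧ (w : ℕ) < uA - 1 then (w : ℕ) + 1 else (w : ℕ) := by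
    intro w
    simp only [rotPerm]
    rw [dif_pos ⟨hxy, hyn⟩]
    simp only [Equiv.coe_fn_mk]
    split_ifs <;> rfl
  have hS : ∀ w : Fin n, Smap n a b π w = rotPerm n (uA1 - 1) (uA - 1) (π w) := by
    intro w
    simp only [Smap]
    rw [if_pos h, ← huAdef, ← huA1def]
    rfl
  rw [hS, hS] at hjl
  simp only [Fin.lt_def] at hjl
  rw [hrot, hrot] at hjl
  have hcase : ((π (idx j) : ℕ) = uA - 1 ∧ uA1 - 1 ≤ (π (idx l) : ℕ) ∧ (π (idx l) : ℕ) < uA - 1)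
      ∨ ((π (idx l) : ℕ) = uA - 1 ∧ uA1 - 1 ≤ (π (idx j) : ℕ) ∧ (π (idx j) : ℕ) < uA - 1) := by
    split_ifs at hjl <;> omega
  rcases hcase with ⟨h1, h2, h3⟩ | ⟨h1, h2, h3⟩
  · exact ⟨⟨j, by omega⟩, ⟨l, key (idx l) (by omega) (by omega)⟩⟩
  · exact ⟨⟨l, by omega⟩, ⟨j, key (idx j) (by omega) (by omega)⟩⟩
end

section
/- Fix integers a ≥ 2 and b ≥ 0 with a + b ≥ 2. If a permutation π of size n avoids the permutation σ_{a,b}, then S preserves the descent set of π: {i ∈ {1,…,n−1} : π_i > π_{i+1}} = {i ∈ {1,…,n−1} : S(π)_i > S(π)_{i+1}}. -/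
lemma right_lemma (a b n : ℕ) (ha : 2 ≤ a) (π : Equiv.Perm (Fin n))
    (ρ : Equiv.Perm (Fin (a + b))) (hρ : ρ ∈ partialShuffle (a + b) (a - 1))
    (f : Fin (a + b) → Fin n) (hf : PermOcc π ρ f)
    (j l : Fin (a + b)) (hj : (ρ j : ℕ) = a - 1) (hl : (ρ l : ℕ) = a - 2)
    (hp1 : (f j : ℕ) + 1 < n)
    (hq1 : (π (f l) : ℕ) ≤ (π ⟨(f j : ℕ) + 1, hp1⟩ : ℕ))
    (hq2 : (π ⟨(f j : ℕ) + 1, hp1⟩ : ℕ) < (π (f j) : ℕ)) :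
    PermContains π (sigmaPerm (a + b) a ha (Nat.le_add_right a b)) := by
  obtain ⟨hρ1, hρ2⟩ := hρ
  obtain ⟨hfm, hfv⟩ := hf
  have key_pos : ∀ r s : Fin (a + b), (r : ℕ) ≠ a - 2 → (s : ℕ) ≠ a - 2 →
      (r : ℕ) < (s : ℕ) → (f (ρ.symm r) : ℕ) < (f (ρ.symm s) : ℕ) := by
    intro r s hr hs hrs
    have hlt : ρ.symm r < ρ.symm s := by
      rcases lt_trichotomy (ρ.symm r) (ρ.symm s) with h' | h' | h'
      · exact h'
      · exfalso
        have : r = s := by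
          have := congrArg ρ h'
          simpa using this
        rw [this] at hrs
        omega
      · exfalso
        have h2 := hρ2 _ _ h' (by rw [Equiv.apply_symm_apply]; omega)
          (by rw [Equiv.apply_symm_apply]; omega)
        rw [Equiv.apply_symm_apply, Equiv.apply_symm_apply, Fin.lt_def] at h2
        omega
    have := hfm hlt
    rwa [Fin.lt_def] at this
  have key_val : ∀ r s : Fin (a + b),
      (π (f (ρ.symm r)) : ℕ) < (π (f (ρ.symm s)) : ℕ) ↔ (r : ℕ) < (s : ℕ) := by
    intro r s
    have := hfv (ρ.symm r) (ρ.symm s)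
    rw [Equiv.apply_symm_apply, Equiv.apply_symm_apply, Fin.lt_def, Fin.lt_def] at this
    exact this
  have hsymml : ρ.symm ⟨a - 2, by omega⟩ = l := by
    rw [Equiv.symm_apply_eq]
    exact (Fin.ext (by simp [hl])).symm
  have hsymmj : ρ.symm ⟨a - 1, by omega⟩ = j := by
    rw [Equiv.symm_apply_eq]
    exact (Fin.ext (by simp [hj])).symm
  have hvlow : ∀ r : Fin (a + b), (r : ℕ) < a - 2 →
      (π (f (ρ.symm r)) : ℕ) < (π (f l) : ℕ) := by
    intro r hr
    have := (key_val r ⟨a - 2, by omega⟩).mpr (by simpa using hr)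
    rwa [hsymml] at this
  have hvhigh : ∀ r : Fin (a + b), a - 1 < (r : ℕ) →
      (π (f j) : ℕ) < (π (f (ρ.symm r)) : ℕ) := by
    intro r hr
    have := (key_val ⟨a - 1, by omega⟩ r).mpr (by simpa using hr)
    rwa [hsymmj] at this
  have hplow : ∀ r : Fin (a + b), (r : ℕ) < a - 1 → (r : ℕ) ≠ a - 2 →
      (f (ρ.symm r) : ℕ) < (f j : ℕ) := by
    intro r hr hr'
    have := key_pos r ⟨a - 1, by omega⟩ hr' (by simp; omega) (by simpa using hr)
    rwa [hsymmj] at this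
  have hphigh : ∀ r : Fin (a + b), a - 1 < (r : ℕ) →
      (f j : ℕ) + 1 < (f (ρ.symm r) : ℕ) := by
    intro r hr
    have h1 := key_pos ⟨a - 1, by omega⟩ r (by simp; omega) (by simp; omega)
      (by simpa using hr)
    rw [hsymmj] at h1
    have h2 : (f (ρ.symm r) : ℕ) ≠ (f j : ℕ) + 1 := by
      intro he
      have : f (ρ.symm r) = (⟨(f j : ℕ) + 1, hp1⟩ : Fin n) := Fin.ext he
      have hv := hvhigh r hr
      rw [this] at hv
      omega
    omega
  -- the new occurrence
  set σ := sigmaPerm (a + b) a ha (Nat.le_add_right a b) with hσdef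
  set f' : Fin (a + b) → Fin n := fun i =>
    if (i : ℕ) = a - 2 then f j
    else if (i : ℕ) = a - 1 then ⟨(f j : ℕ) + 1, hp1⟩
    else f (ρ.symm i) with hf'def
  have hswap : ∀ i : Fin (a + b), ((σ i : Fin (a + b)) : ℕ) =
      if (i : ℕ) = a - 2 then a - 1 else if (i : ℕ) = a - 1 then a - 2 else (i : ℕ) := by
    intro i
    rw [hσdef]
    unfold sigmaPerm
    split_ifs with h1 h2
    · rw [show i = (⟨a - 2, by omega⟩ : Fin (a + b)) from Fin.ext h1, Equiv.swap_apply_left]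
    · rw [show i = (⟨a - 1, by omega⟩ : Fin (a + b)) from Fin.ext h2, Equiv.swap_apply_right]
    · rw [Equiv.swap_apply_of_ne_of_ne (fun hh => h1 (congrArg Fin.val hh))
        (fun hh => h2 (congrArg Fin.val hh))]
  have hfval : ∀ i : Fin (a + b), (π (f' i) : ℕ) =
      if (i : ℕ) = a - 2 then (π (f j) : ℕ)
      else if (i : ℕ) = a - 1 then (π ⟨(f j : ℕ) + 1, hp1⟩ : ℕ)
      else (π (f (ρ.symm i)) : ℕ) := by
    intro i
    rw [hf'def]
    simp only
    split_ifs <;> rfl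
  have main : ∀ i1 i2 : Fin (a + b), (σ i1 : ℕ) < (σ i2 : ℕ) →
      (π (f' i1) : ℕ) < (π (f' i2) : ℕ) := by
    intro i1 i2 hs
    rw [hswap i1, hswap i2] at hs
    rw [hfval i1, hfval i2]
    by_cases h1 : (i1 : ℕ) = a - 2
    · rw [if_pos h1] at hs ⊢
      by_cases h3 : (i2 : ℕ) = a - 2
      · rw [if_pos h3] at hs; omega
      · rw [if_neg h3] at hs ⊢
        by_cases h4 : (i2 : ℕ) = a - 1
        · rw [if_pos h4] at hs; omega
        · rw [if_neg h4] at hs ⊢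
          exact hvhigh i2 hs
    · rw [if_neg h1] at hs ⊢
      by_cases h2 : (i1 : ℕ) = a - 1
      · rw [if_pos h2] at hs ⊢
        by_cases h3 : (i2 : ℕ) = a - 2
        · rw [if_pos h3] at hs ⊢
          exact hq2
        · rw [if_neg h3] at hs ⊢
          by_cases h4 : (i2 : ℕ) = a - 1
          · rw [if_pos h4] at hs; omega
          · rw [if_neg h4] at hs ⊢
            have : a - 1 < (i2 : ℕ) := by omega
            have := hvhigh i2 this
            omega
      · rw [if_neg h2] at hs ⊢
        by_cases h3 : (i2 : ℕ) = a - 2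
        · rw [if_pos h3] at hs ⊢
          have : (i1 : ℕ) < a - 2 := by omega
          have := hvlow i1 this
          omega
        · rw [if_neg h3] at hs ⊢
          by_cases h4 : (i2 : ℕ) = a - 1
          · rw [if_pos h4] at hs ⊢
            have : (i1 : ℕ) < a - 2 := by omega
            have := hvlow i1 this
            omega
          · rw [if_neg h4] at hs ⊢
            exact (key_val i1 i2).mpr hs
  have hiff : ∀ i1 i2 : Fin (a + b), π (f' i1) < π (f' i2) ↔ σ i1 < σ i2 := by
    intro i1 i2
    constructor
    · intro hlt
      rcases lt_trichotomy (σ i1) (σ i2) with h' | h' | h'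
      · exact h'
      · exfalso
        have : i1 = i2 := σ.injective h'
        rw [this] at hlt
        exact lt_irrefl _ hlt
      · exfalso
        have := main i2 i1 (by rwa [← Fin.lt_def])
        rw [Fin.lt_def] at hlt
        omega
    · intro h'
      rw [Fin.lt_def]
      exact main i1 i2 (Fin.lt_def.mp h')
  have hmono : StrictMono f' := by
    intro i1 i2 h12
    rw [Fin.lt_def] at h12 ⊢
    have hval1 : ∀ i : Fin (a + b), (f' i : ℕ) =
        if (i : ℕ) = a - 2 then (f j : ℕ)
        else if (i : ℕ) = a - 1 then (f j : ℕ) + 1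
        else (f (ρ.symm i) : ℕ) := by
      intro i
      rw [hf'def]
      simp only
      split_ifs <;> rfl
    rw [hval1 i1, hval1 i2]
    by_cases h1 : (i1 : ℕ) = a - 2
    · rw [if_pos h1]
      by_cases h3 : (i2 : ℕ) = a - 2
      · omega
      · rw [if_neg h3]
        by_cases h4 : (i2 : ℕ) = a - 1
        · rw [if_pos h4]; omega
        · rw [if_neg h4]
          have : a - 1 < (i2 : ℕ) := by omega
          have := hphigh i2 this
          omega
    · rw [if_neg h1]
      by_cases h2 : (i1 : ℕ) = a - 1
      · rw [if_pos h2]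
        by_cases h3 : (i2 : ℕ) = a - 2
        · omega
        · rw [if_neg h3]
          by_cases h4 : (i2 : ℕ) = a - 1
          · omega
          · rw [if_neg h4]
            exact hphigh i2 (by omega)
      · rw [if_neg h2]
        by_cases h3 : (i2 : ℕ) = a - 2
        · rw [if_pos h3]
          exact hplow i1 (by omega) h1
        · rw [if_neg h3]
          by_cases h4 : (i2 : ℕ) = a - 1
          · rw [if_pos h4]
            have := hplow i1 (by omega) h1
            omega
          · rw [if_neg h4]
            exact key_pos i1 i2 h1 h3 h12
  exact ⟨f', hmono, hiff⟩

private lemma fin_strictMono_le_apply {m : ℕ} {f : Fin m → Fin m} (hf : StrictMono f)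
    (x : Fin m) : x ≤ f x := by
  haveI hwf : WellFoundedLT (Fin m) := inferInstance
  exact StrictMono.le_apply hf

private lemma perm_exists_inversion {m : ℕ} (ρ : Equiv.Perm (Fin m)) (h : ρ ≠ 1) :
    ∃ i j : Fin m, i < j ∧ ρ j < ρ i := by
  by_contra hc
  push_neg at hc
  have hsm : StrictMono (⇑ρ) := by
    intro i j hij
    rcases lt_or_eq_of_le (hc i j hij) with h' | h'
    · exact h'
    · exact absurd (ρ.injective h') hij.ne
  have hsm' : StrictMono (⇑ρ.symm) := by
    intro i j hij
    rcases lt_trichotomy (ρ.symm i) (ρ.symm j) with h' | h' | h'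
    · exact h'
    · exact absurd (congrArg ρ h') (by simpa using hij.ne)
    · have := hsm h'
      simp only [Equiv.apply_symm_apply] at this
      exact absurd this (asymm hij)
  apply h
  apply Equiv.ext
  intro x
  have h1 : x ≤ ρ x := fin_strictMono_le_apply hsm x
  have h2 : x ≤ ρ.symm x := fin_strictMono_le_apply hsm' x
  have h3 : ρ x ≤ x := by
    have := hsm.monotone h2
    simpa using this
  exact le_antisymm h3 h1

lemma left_lemma (a b n : ℕ) (ha : 2 ≤ a) (π : Equiv.Perm (Fin n))
    (ρ : Equiv.Perm (Fin (a + b))) (hρ : ρ ∈ partialShuffle (a + b) (a - 1))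
    (f : Fin (a + b) → Fin n) (hf : PermOcc π ρ f)
    (j l : Fin (a + b)) (hj : (ρ j : ℕ) = a - 1) (hl : (ρ l : ℕ) = a - 2)
    (hAv : ∀ v, ActsAs π (partialShuffle (a + b) (a - 1)) a v → (π (f j) : ℕ) + 1 ≤ v)
    (hp0 : 1 ≤ (f j : ℕ))
    (hq1 : (π (f l) : ℕ) ≤
      (π ⟨(f j : ℕ) - 1, Nat.lt_of_le_of_lt (Nat.sub_le _ _) (f j).isLt⟩ : ℕ))
    (hq2 : (π ⟨(f j : ℕ) - 1, Nat.lt_of_le_of_lt (Nat.sub_le _ _) (f j).isLt⟩ : ℕ) <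
      (π (f j) : ℕ)) : False := by
  obtain ⟨hρ1, hρ2⟩ := hρ
  obtain ⟨hfm, hfv⟩ := hf
  set pos : Fin n := ⟨(f j : ℕ) - 1, Nat.lt_of_le_of_lt (Nat.sub_le _ _) (f j).isLt⟩
    with hposdef
  have hposval : (pos : ℕ) = (f j : ℕ) - 1 := rfl
  have hjl : (π (f l) : ℕ) < (π (f j) : ℕ) := by
    have := (hfv l j).mpr (by rw [Fin.lt_def]; omega)
    rwa [Fin.lt_def] at this
  rcases eq_or_lt_of_le hq1 with hA | hB
  · -- the (a-1)-entry is exactly the left neighbour: derive ρ = 1 style contradiction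
    have hfl : f l = pos := π.injective (Fin.ext hA)
    obtain ⟨i1, i2, h12, hinv⟩ := perm_exists_inversion ρ hρ1
    rw [Fin.lt_def] at hinv
    by_cases hc1 : (ρ i1 : ℕ) = a - 2
    · have hi1l : i1 = l := ρ.injective (Fin.ext (by rw [hc1, hl]))
      have hj2 : i2 ≠ j := by
        intro he
        rw [he, hj] at hinv
        omega
      have hlt2 : i2 < j := by
        rcases lt_trichotomy i2 j with h' | h' | h'
        · exact h'
        · exact absurd h' hj2
        · exfalso
          have := hρ2 j i2 h' (by omega) (by omega)
          rw [Fin.lt_def] at this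
          omega
      have hb1 := hfm hlt2
      have hb2 := hfm (hi1l ▸ h12)
      rw [hfl] at hb2
      rw [Fin.lt_def] at hb1 hb2
      omega
    · by_cases hc2 : (ρ i2 : ℕ) = a - 2
      · have hi2l : i2 = l := ρ.injective (Fin.ext (by rw [hc2, hl]))
        by_cases hc3 : (ρ i1 : ℕ) = a - 1
        · have hi1j : i1 = j := ρ.injective (Fin.ext (by rw [hc3, hj]))
          have := hfm h12
          rw [hi1j, hi2l, hfl, Fin.lt_def] at this
          omega
        · have hgt : a - 1 < (ρ i1 : ℕ) := by omega
          have hlt1 : j < i1 := by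
            rcases lt_trichotomy j i1 with h' | h' | h'
            · exact h'
            · exfalso; rw [← h', hj] at hgt; omega
            · exfalso
              have := hρ2 i1 j h' (by omega) (by omega)
              rw [Fin.lt_def] at this
              omega
          have hb1 := hfm hlt1
          have hb2 := hfm h12
          rw [hi2l, hfl] at hb2
          rw [Fin.lt_def] at hb1 hb2
          omega
      · have := hρ2 i1 i2 h12 (by omega) (by omega)
        rw [Fin.lt_def] at this
        omega
  · -- the left neighbour is strictly above the (a-1)-value: replace the a-entry by it
    set f'' : Fin (a + b) → Fin n := fun i => if i = j then pos else f i with hf''def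
    have hside : ∀ i : Fin (a + b), i ≠ j →
        ((ρ i : ℕ) < a - 1 ∧ (π (f i) : ℕ) < (π pos : ℕ)) ∨
        (a - 1 < (ρ i : ℕ) ∧ (π pos : ℕ) < (π (f i) : ℕ)) := by
      intro i hi
      have hne : (ρ i : ℕ) ≠ a - 1 := by
        intro he
        exact hi (ρ.injective (Fin.ext (by rw [he, hj])))
      rcases lt_or_gt_of_ne hne with h' | h'
      · left
        refine ⟨h', ?_⟩
        by_cases hc : (ρ i : ℕ) = a - 2
        · have : i = l := ρ.injective (Fin.ext (by rw [hc, hl]))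
          rw [this]; exact hB
        · have : (π (f i) : ℕ) < (π (f l) : ℕ) := by
            have := (hfv i l).mpr (by rw [Fin.lt_def]; omega)
            rwa [Fin.lt_def] at this
          omega
      · right
        refine ⟨h', ?_⟩
        have : (π (f j) : ℕ) < (π (f i) : ℕ) := by
          have := (hfv j i).mpr (by rw [Fin.lt_def]; omega)
          rwa [Fin.lt_def] at this
        omega
    have hmono : StrictMono f'' := by
      intro i1 i2 h12
      rw [hf''def]
      simp only
      by_cases e1 : i1 = j
      · rw [if_pos e1, if_neg (by intro he; rw [he] at h12; exact absurd (e1 ▸ h12) (lt_irrefl j))]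
        have := hfm (e1 ▸ h12)
        rw [Fin.lt_def] at this ⊢
        omega
      · rw [if_neg e1]
        by_cases e2 : i2 = j
        · rw [if_pos e2]
          have hlt := hfm (e2 ▸ h12)
          have hne : f i1 ≠ pos := by
            intro he
            rcases hside i1 e1 with ⟨_, hv⟩ | ⟨_, hv⟩ <;> rw [he] at hv <;> omega
          rw [Fin.lt_def] at hlt ⊢
          have : (f i1 : ℕ) ≠ (pos : ℕ) := fun hh => hne (Fin.ext hh)
          omega
        · rw [if_neg e2]
          exact hfm h12
    have hiff : ∀ i1 i2 : Fin (a + b), π (f'' i1) < π (f'' i2) ↔ ρ i1 < ρ i2 := by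
      intro i1 i2
      rw [hf''def]
      simp only
      by_cases e1 : i1 = j
      · rw [if_pos e1]
        by_cases e2 : i2 = j
        · rw [if_pos e2, e1, e2]
          simp [lt_irrefl]
        · rw [if_neg e2, e1]
          rw [Fin.lt_def, Fin.lt_def, hj]
          rcases hside i2 e2 with ⟨hr, hv⟩ | ⟨hr, hv⟩ <;> omega
      · rw [if_neg e1]
        by_cases e2 : i2 = j
        · rw [if_pos e2, e2]
          rw [Fin.lt_def, Fin.lt_def, hj]
          rcases hside i1 e1 with ⟨hr, hv⟩ | ⟨hr, hv⟩ <;> omega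
        · rw [if_neg e2]
          exact hfv i1 i2
    have hacts : ActsAs π (partialShuffle (a + b) (a - 1)) a ((π pos : ℕ) + 1) := by
      refine ⟨ρ, ⟨hρ1, hρ2⟩, f'', ⟨hmono, hiff⟩, j, by omega, ?_⟩
      rw [hf''def]
      simp
    have := hAv _ hacts
    omega

theorem Smap_preserves_descent_set (a b n : ℕ) (ha : 2 ≤ a) (π : Equiv.Perm (Fin n))
    (h : ¬ PermContains π (sigmaPerm (a + b) a ha (Nat.le_add_right a b))) :
    {i : ℕ | ∃ (h1 : i < n) (h2 : i + 1 < n), π ⟨i + 1, h2⟩ < π ⟨i, h1⟩} =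
      {i : ℕ | ∃ (h1 : i < n) (h2 : i + 1 < n),
        Smap n a b π ⟨i + 1, h2⟩ < Smap n a b π ⟨i, h1⟩} := by
  by_cases hC : ∃ ρ ∈ partialShuffle (a + b) (a - 1), PermContains π ρ
  case neg =>
    have hS : Smap n a b π = π := by
      simp only [Smap]
      rw [if_neg hC]
    rw [hS]
  case pos =>
    have ha1lt : a - 1 < a + b := by omega
    have ha2lt : a - 2 < a + b := by omega
    have hUAne : {v | ActsAs π (partialShuffle (a + b) (a - 1)) a v}.Nonempty := by
      obtain ⟨ρ₀, hρ₀, f₀, hocc₀⟩ := hC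
      refine ⟨(π (f₀ (ρ₀.symm ⟨a - 1, ha1lt⟩)) : ℕ) + 1, ρ₀, hρ₀, f₀, hocc₀,
        ρ₀.symm ⟨a - 1, ha1lt⟩, ?_, rfl⟩
      rw [Equiv.apply_symm_apply]
      simp only [Fin.val_mk]
      omega
    have hA_mem : ActsAs π (partialShuffle (a + b) (a - 1)) a (underA n a b π) :=
      Nat.sInf_mem hUAne
    have hAssocne : {q | IsAssoc n a b π q}.Nonempty := by
      obtain ⟨ρ₁, hρ₁, f₁, hocc₁, j₁, hj₁, hv₁⟩ := hA_mem
      refine ⟨(π (f₁ (ρ₁.symm ⟨a - 2, ha2lt⟩)) : ℕ) + 1, ρ₁, hρ₁, f₁, hocc₁,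
        ⟨j₁, hj₁, hv₁⟩, ρ₁.symm ⟨a - 2, ha2lt⟩, ?_, rfl⟩
      rw [Equiv.apply_symm_apply]
      simp only [Fin.val_mk]
      omega
    have hassoc : IsAssoc n a b π (underA1 n a b π) := Nat.sInf_mem hAssocne
    obtain ⟨ρ, hρ, f, hocc, ⟨j, hj, hjv⟩, ⟨l, hl, hlv⟩⟩ := hassoc
    have hj' : (ρ j : ℕ) = a - 1 := by omega
    have hl' : (ρ l : ℕ) = a - 2 := by omega
    set x := (π (f l) : ℕ) with hxdef
    set y := (π (f j) : ℕ) with hydef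
    have hxy : x < y := by
      have := (hocc.2 l j).mpr (by rw [Fin.lt_def]; omega)
      rw [Fin.lt_def] at this
      exact this
    have hyn : y < n := (π (f j)).isLt
    have e1 : underA1 n a b π - 1 = x := by omega
    have e2 : underA n a b π - 1 = y := by omega
    have hSmap : Smap n a b π = rotPerm n x y * π := by
      simp only [Smap]
      rw [if_pos hC, e1, e2]
    have hrot : ∀ v : Fin n, ((rotPerm n x y) v : ℕ) =
        if (v : ℕ) = y then x
        else if x ≤ (v : ℕ) ∧ (v : ℕ) < y then (v : ℕ) + 1 else (v : ℕ) := by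
      intro v
      simp only [rotPerm]
      rw [dif_pos (show x ≤ y ∧ y < n from ⟨hxy.le, hyn⟩)]
      simp only [Equiv.coe_fn_mk]
      split_ifs <;> rfl
    have hAv : ∀ v, ActsAs π (partialShuffle (a + b) (a - 1)) a v →
        (π (f j) : ℕ) + 1 ≤ v := by
      intro v hv
      have h5 : underA n a b π ≤ v := Nat.sInf_le hv
      omega
    have hR : ∀ (h2 : (f j : ℕ) + 1 < n),
        ¬ (x ≤ (π ⟨(f j : ℕ) + 1, h2⟩ : ℕ) ∧ (π ⟨(f j : ℕ) + 1, h2⟩ : ℕ) < y) := by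
      intro h2 hcon
      exact h (right_lemma a b n ha π ρ hρ f hocc j l hj' hl' h2 hcon.1 hcon.2)
    have hL : ∀ (hp0 : 1 ≤ (f j : ℕ)),
        ¬ (x ≤ (π ⟨(f j : ℕ) - 1, Nat.lt_of_le_of_lt (Nat.sub_le _ _) (f j).isLt⟩ : ℕ) ∧
           (π ⟨(f j : ℕ) - 1, Nat.lt_of_le_of_lt (Nat.sub_le _ _) (f j).isLt⟩ : ℕ) < y) := by
      intro hp0 hcon
      exact left_lemma a b n ha π ρ hρ f hocc j l hj' hl' hAv hp0 hcon.1 hcon.2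
    have core : ∀ (i : ℕ) (h1 : i < n) (h2 : i + 1 < n),
        (π ⟨i + 1, h2⟩ < π ⟨i, h1⟩ ↔
          Smap n a b π ⟨i + 1, h2⟩ < Smap n a b π ⟨i, h1⟩) := by
      intro i h1 h2
      rw [hSmap, Equiv.Perm.mul_apply, Equiv.Perm.mul_apply]
      rw [Fin.lt_def, Fin.lt_def, hrot (π ⟨i + 1, h2⟩), hrot (π ⟨i, h1⟩)]
      have hne : (π ⟨i, h1⟩ : ℕ) ≠ (π ⟨i + 1, h2⟩ : ℕ) := by
        intro he
        have h6 := congrArg Fin.val (π.injective (Fin.ext he))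
        simp only [Fin.val_mk] at h6
        omega
      by_cases hu : (π ⟨i, h1⟩ : ℕ) = y
      · have hfj : f j = ⟨i, h1⟩ := π.injective (Fin.ext (by rw [hu]))
        have hfjv : (f j : ℕ) = i := congrArg Fin.val hfj
        have h2' : (f j : ℕ) + 1 < n := by omega
        have hRn := hR h2'
        rw [show (⟨(f j : ℕ) + 1, h2'⟩ : Fin n) = ⟨i + 1, h2⟩ from Fin.ext (by simp only [Fin.val_mk]; omega)] at hRn
        split_ifs <;> omega
      · by_cases hz : (π ⟨i + 1, h2⟩ : ℕ) = y
        · have hfj : f j = ⟨i + 1, h2⟩ := π.injective (Fin.ext (by rw [hz]))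
          have hfjv : (f j : ℕ) = i + 1 := congrArg Fin.val hfj
          have hp0 : 1 ≤ (f j : ℕ) := by omega
          have hLn := hL hp0
          rw [show (⟨(f j : ℕ) - 1, Nat.lt_of_le_of_lt (Nat.sub_le _ _) (f j).isLt⟩ : Fin n)
            = ⟨i, h1⟩ from Fin.ext (by simp only [Fin.val_mk]; omega)] at hLn
          split_ifs <;> omega
        · split_ifs <;> omega
    ext i
    simp only [Set.mem_setOf_eq]
    constructor
    · rintro ⟨h1, h2, hlt⟩
      exact ⟨h1, h2, (core i h1 h2).mp hlt⟩
    · rintro ⟨h1, h2, hlt⟩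
      exact ⟨h1, h2, (core i h1 h2).mpr hlt⟩
end
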